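/- Let Δ be a reflexive polytope with unimodular central triangulation T, with unique interior lattice point o, and let ε, ε' : (Δ ∩ M) → 𝔽₂ be sign distributions with ε(o) = ε'(o). Let D = Σ_{v : ε(v)=ε(o)} D_v and D' = Σ_{v : ε'(v)=ε'(o)} D_v be the associated toric 𝔽₂-divisors on ℂΣ_T. Then D and D' define the same class in Pic_{𝔽₂}(ℂΣ_T) if and only if there exists ξ ∈ Hom(M, 𝔽₂) such that ε'(v) = ε(v) + ξ(v - o) for all lattice points v of Δ. -/
import Mathlib


/-- A point of `ℝ^d` is a lattice point if all its coordinates are integers. -/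
def IsLatticePoint {d : ℕ} (u : Fin d → ℝ) : Prop := ∀ i, ∃ z : ℤ, u i = z

/-- A lattice polytope is the convex hull of finitely many lattice points. -/
def IsLatticePolytope {d : ℕ} (S : Set (Fin d → ℝ)) : Prop :=
  ∃ F : Finset (Fin d → ℝ), (∀ v ∈ F, IsLatticePoint v) ∧ S = convexHull ℝ (F : Set (Fin d → ℝ))

/-- A set is a reflexive polytope if it is a lattice polytope cut out by inequalities
`⟨v, u⟩ ≤ 1` with `v` ranging over a finite set of lattice vectors. -/
def IsReflexive {d : ℕ} (S : Set (Fin d → ℝ)) : Prop :=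
  IsLatticePolytope S ∧ ∃ V : Finset (Fin d → ℝ), (∀ v ∈ V, IsLatticePoint v) ∧
    S = {u | ∀ v ∈ V, ∑ i, v i * u i ≤ 1}

private lemma ind_sub (a b c : ZMod 2) :
    ((if a = c then (1 : ZMod 2) else 0) - (if b = c then 1 else 0)) = a + b := by
  revert a b c; decide

private lemma hom_eq_sum {d : ℕ} (ξ : (Fin d → ℤ) →+ ZMod 2) (v : Fin d → ℤ) :
    ξ v = ∑ i, (v i : ZMod 2) * ξ (Pi.single i 1) := by
  have hv : v = ∑ i, (v i) • Pi.single i (1 : ℤ) := by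
    funext j
    simp [Finset.sum_apply, Pi.single_apply]
  conv_lhs => rw [hv]
  rw [map_sum]
  refine Finset.sum_congr rfl fun i _ => ?_
  rw [map_zsmul, zsmul_eq_mul]

/-- Let `Δ` be a reflexive polytope; its nonzero lattice points `B` are
the primitive ray generators of the fan `Σ_T` of a unimodular central triangulation `T`
(the unique interior lattice point being the origin `o = 0`).  Given sign distributions
`ε, ε'` with `ε o = ε' o`, and the associated toric `𝔽₂`-divisors
`D = ∑_{ε v = ε o} D_v`, `D' = ∑_{ε' v = ε' o} D_v`, the divisors `D` and `D'` define the
same class in `Pic_{𝔽₂}(ℂΣ_T)` — i.e. their difference lies in the image of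
`N ⊗ 𝔽₂ → ⊕_{v ∈ B} 𝔽₂·D_v`, `n ↦ ∑_v ⟨n, v⟩ D_v` — if and only if there is a group
homomorphism `ξ : M → 𝔽₂` with `ε' v = ε v + ξ (v - o)` for all lattice points `v` of `Δ`. -/
theorem divisor_classes_eq_iff_sign_translate {d : ℕ} (Δ : Set (Fin d → ℝ))
    (hΔ : IsReflexive Δ)
    (B : Finset (Fin d → ℤ))
    (hB : ∀ v : Fin d → ℤ, v ∈ B ↔ ((fun i => (v i : ℝ)) ∈ Δ ∧ v ≠ 0))
    (ε ε' : (Fin d → ℤ) → ZMod 2) (ho : ε 0 = ε' 0)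
    (D D' : ↥B → ZMod 2)
    (hD : ∀ v : ↥B, D v = if ε v.1 = ε 0 then 1 else 0)
    (hD' : ∀ v : ↥B, D' v = if ε' v.1 = ε' 0 then 1 else 0) :
    (D - D') ∈ LinearMap.range
        (Matrix.mulVecLin (Matrix.of fun (v : ↥B) (i : Fin d) => ((v.1 i : ZMod 2))))
      ↔ ∃ ξ : (Fin d → ℤ) →+ ZMod 2, ∀ v : Fin d → ℤ,
          (fun i => (v i : ℝ)) ∈ Δ → ε' v = ε v + ξ (v - 0) := by
  have key : ∀ v : ↥B, (D - D') v = ε v.1 + ε' v.1 := by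
    intro v
    rw [Pi.sub_apply, hD v, hD' v, ← ho, ind_sub]
  constructor
  · rintro ⟨x, hx⟩
    refine ⟨AddMonoidHom.mk' (fun v => ∑ i, (v i : ZMod 2) * x i) ?_, ?_⟩
    · intro a b
      simp [add_mul, Finset.sum_add_distrib]
    · intro v hv
      by_cases h0 : v = 0
      · subst h0; simpa using ho.symm
      · have hvB : v ∈ B := (hB v).2 ⟨hv, h0⟩
        have := congrFun hx ⟨v, hvB⟩
        rw [key ⟨v, hvB⟩] at this
        simp only [Matrix.mulVecLin_apply, Matrix.mulVec, dotProduct,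
          Matrix.of_apply] at this
        simp only [sub_zero, AddMonoidHom.mk'_apply]
        rw [this, ← add_assoc, CharTwo.add_self_eq_zero, zero_add]
  · rintro ⟨ξ, hξ⟩
    refine ⟨fun i => ξ (Pi.single i 1), ?_⟩
    funext v
    have hvΔ : (fun i => ((v.1 : Fin d → ℤ) i : ℝ)) ∈ Δ := ((hB v.1).1 v.2).1
    have h := hξ v.1 hvΔ
    rw [sub_zero, hom_eq_sum] at h
    rw [key v]
    simp only [Matrix.mulVecLin_apply, Matrix.mulVec, dotProduct, Matrix.of_apply]
    rw [h]
    ring_nf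
    have h2 : (2 : ZMod 2) = 0 := rfl
    rw [h2, mul_zero, zero_add]
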